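/- Let f ∈ ℂ{x}[y] be an irreducible Weierstrass polynomial of degree n with a Newton–Puiseux root γ(x) = Σ_{i≥1} a_i x^{i/n}. Then the full set of Newton–Puiseux roots of f is {γ_j(x) = Σ_i a_i ω^{(j-1)i} x^{i/n} : 1 ≤ j ≤ n}, where ω is a primitive n-th root of unity. -/

import Mathlib

noncomputable section

open Polynomial

/-- The substitution `x^{1/n} ↦ ε·x^{1/n}` on fractional power series: it sends
`Σ a_{i} x^{i/n}` to `Σ a_{i} ε^{i} x^{i/n}` (here the exponent of `ε` at `x^q`
is the integer `q·n`). -/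
def twist (n : ℕ) (ε : ℂ) (γ : HahnSeries ℚ ℂ) : HahnSeries ℚ ℂ where
  coeff q := ε ^ (q * n : ℚ).num * γ.coeff q
  isPWO_support' := γ.isPWO_support.mono (by
    intro q hq
    simp only [Function.mem_support] at hq ⊢
    intro h
    simp [h] at hq)

namespace NP

abbrev L := HahnSeries ℚ ℂ

abbrev φ : PowerSeries ℂ →+* L := HahnSeries.ofPowerSeries ℚ ℂ

lemma twist_coeff (m : ℕ) (ε : ℂ) (γ : L) (q : ℚ) :
    (twist m ε γ).coeff q = ε ^ (q * m : ℚ).num * γ.coeff q := rfl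

lemma num_eq (q : ℚ) (k : ℤ) (h : q = (k : ℚ)) : q.num = k := by
  subst h; exact Rat.num_intCast k

lemma twist_support_subset (m : ℕ) (ε : ℂ) (γ : L) :
    (twist m ε γ).support ⊆ γ.support := by
  intro q hq
  rw [HahnSeries.mem_support] at hq ⊢
  rw [twist_coeff] at hq
  intro h; rw [h, mul_zero] at hq; exact hq rfl

lemma twist_add (m : ℕ) (ε : ℂ) (a b : L) :
    twist m ε (a + b) = twist m ε a + twist m ε b := by
  ext q
  simp [twist_coeff, mul_add]

lemma twist_zero (m : ℕ) (ε : ℂ) : twist m ε 0 = 0 := by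
  ext q; simp [twist_coeff]

lemma twist_one (m : ℕ) (ε : ℂ) : twist m ε 1 = 1 := by
  ext q
  rw [twist_coeff]
  by_cases hq : q = 0
  · subst hq; simp
  · rw [HahnSeries.coeff_one]; simp [hq]

lemma twist_twist (m : ℕ) (ε ε' : ℂ) (γ : L) :
    twist m ε (twist m ε' γ) = twist m (ε * ε') γ := by
  ext q
  simp [twist_coeff, mul_zpow, mul_assoc]

lemma twist_mul {ε : ℂ} (hε : ε ≠ 0) {m : ℕ} {a b : L}
    (ha : ∀ q ∈ a.support, ∃ k : ℤ, q * m = (k : ℚ))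
    (hb : ∀ q ∈ b.support, ∃ k : ℤ, q * m = (k : ℚ)) :
    twist m ε (a * b) = twist m ε a * twist m ε b := by
  ext q
  rw [twist_coeff, HahnSeries.coeff_mul, HahnSeries.coeff_mul]
  have hstep : ∑ ij ∈ Finset.antidiagonal (twist m ε a).isPWO_support
        (twist m ε b).isPWO_support q, (twist m ε a).coeff ij.1 * (twist m ε b).coeff ij.2
      = ∑ ij ∈ Finset.antidiagonal a.isPWO_support b.isPWO_support q,
        (twist m ε a).coeff ij.1 * (twist m ε b).coeff ij.2 := by
    apply Finset.sum_subset
    · intro ij hij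
      rw [Finset.mem_antidiagonal] at hij ⊢
      exact ⟨twist_support_subset m ε a hij.1, twist_support_subset m ε b hij.2.1, hij.2.2⟩
    · intro ij hij hij'
      rw [Finset.mem_antidiagonal] at hij hij'
      push_neg at hij'
      by_cases h1 : ij.1 ∈ (twist m ε a).support
      · have h2 := hij' h1
        by_cases h3 : ij.2 ∈ (twist m ε b).support
        · exact absurd hij.2.2 (h2 h3)
        · rw [HahnSeries.mem_support, not_not] at h3
          rw [h3, mul_zero]
      · rw [HahnSeries.mem_support, not_not] at h1
        rw [h1, zero_mul]
  rw [hstep, Finset.mul_sum]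
  apply Finset.sum_congr rfl
  intro ij hij
  rw [Finset.mem_antidiagonal] at hij
  obtain ⟨hi, hj, hsum⟩ := hij
  obtain ⟨k₁, hk₁⟩ := ha ij.1 hi
  obtain ⟨k₂, hk₂⟩ := hb ij.2 hj
  rw [twist_coeff, twist_coeff]
  have hq : q * m = ((k₁ + k₂ : ℤ) : ℚ) := by
    rw [← hsum, add_mul, hk₁, hk₂]; push_cast; ring
  rw [num_eq _ _ hq, num_eq _ _ hk₁, num_eq _ _ hk₂, zpow_add₀ hε]
  ring

lemma twist_fix {ε : ℂ} {m : ℕ} (hεm : ε ^ m = 1) {h : L}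
    (hsupp : ∀ q ∈ h.support, ∃ k : ℤ, q = (k : ℚ)) :
    twist m ε h = h := by
  ext q
  rw [twist_coeff]
  by_cases hc : h.coeff q = 0
  · rw [hc, mul_zero]
  · obtain ⟨k, hk⟩ := hsupp q ((HahnSeries.mem_support h q).2 hc)
    have hq : q * m = (((m : ℤ) * k : ℤ) : ℚ) := by rw [hk]; push_cast; ring
    rw [num_eq _ _ hq, zpow_mul, zpow_natCast, hεm, one_zpow, one_mul]

lemma ofPowerSeries_support (p : PowerSeries ℂ) :
    ∀ q ∈ (φ p).support, ∃ k : ℕ, q = (k : ℚ) := by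
  intro q hq
  rw [HahnSeries.mem_support] at hq
  by_contra hcon
  push_neg at hcon
  have : q ∉ Set.range ((fun (k : ℕ) => (k : ℚ))) := by
    rintro ⟨k, rfl⟩; exact hcon k rfl
  rw [HahnSeries.ofPowerSeries_apply] at hq
  exact hq (HahnSeries.embDomain_notin_range this)

lemma mem_range_ofPowerSeries (h : L)
    (hsupp : ∀ q ∈ h.support, ∃ k : ℕ, q = (k : ℚ)) :
    ∃ p : PowerSeries ℂ, φ p = h := by
  refine ⟨PowerSeries.mk fun k => h.coeff k, ?_⟩
  ext q
  by_cases hq : ∃ k : ℕ, q = (k : ℚ)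
  · obtain ⟨k, rfl⟩ := hq
    rw [HahnSeries.ofPowerSeries_apply_coeff, PowerSeries.coeff_mk]
  · push_neg at hq
    have h1 : (φ (PowerSeries.mk fun k => h.coeff k)).coeff q = 0 := by
      rw [HahnSeries.ofPowerSeries_apply]
      apply HahnSeries.embDomain_notin_range
      rintro ⟨k, rfl⟩; exact hq k rfl
    have h2 : h.coeff q = 0 := by
      by_contra hc
      obtain ⟨k, hk⟩ := hsupp q ((HahnSeries.mem_support h q).2 hc)
      exact hq k hk
    rw [h1, h2]

/-- The subring of Hahn series supported on `(1/m)·ℤ`. -/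
def sub (m : ℕ) : Subring L where
  carrier := {h | ∀ q ∈ h.support, ∃ k : ℤ, q * m = (k : ℚ)}
  zero_mem' := by
    intro q hq
    rw [HahnSeries.mem_support, HahnSeries.coeff_zero] at hq
    exact absurd rfl hq
  one_mem' := by
    intro q hq
    rw [HahnSeries.mem_support] at hq
    refine ⟨0, ?_⟩
    by_cases h : q = 0
    · rw [h]; push_cast; ring
    · rw [HahnSeries.coeff_one, if_neg h] at hq; exact absurd rfl hq
  add_mem' := by
    intro a b ha hb q hq
    rw [HahnSeries.mem_support, HahnSeries.coeff_add] at hq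
    by_cases h : a.coeff q = 0
    · rw [h, zero_add] at hq; exact hb q ((HahnSeries.mem_support b q).2 hq)
    · exact ha q ((HahnSeries.mem_support a q).2 h)
  neg_mem' := by
    intro a ha q hq
    rw [HahnSeries.mem_support, HahnSeries.coeff_neg, neg_ne_zero] at hq
    exact ha q ((HahnSeries.mem_support a q).2 hq)
  mul_mem' := by
    intro a b ha hb q hq
    obtain ⟨q₁, hq₁, q₂, hq₂, rfl⟩ := HahnSeries.support_mul_subset hq
    obtain ⟨k₁, hk₁⟩ := ha q₁ hq₁
    obtain ⟨k₂, hk₂⟩ := hb q₂ hq₂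
    exact ⟨k₁ + k₂, by rw [add_mul, hk₁, hk₂]; push_cast; ring⟩

/-- `twist m ε` as a ring hom on `sub m`. -/
def twistHom (m : ℕ) (ε : ℂ) (hε : ε ≠ 0) : sub m →+* L where
  toFun h := twist m ε h.1
  map_one' := twist_one m ε
  map_mul' a b := twist_mul hε a.2 b.2
  map_zero' := twist_zero m ε
  map_add' a b := twist_add m ε a.1 b.1

lemma nat_supp_mem_sub (m : ℕ) (h : L)
    (hs : ∀ q ∈ h.support, ∃ k : ℕ, q = (k : ℚ)) : h ∈ sub m := by
  intro q hq
  obtain ⟨k, hk⟩ := hs q hq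
  exact ⟨(k : ℤ) * m, by rw [hk]; push_cast; ring⟩

/-- `φ` corestricted to `sub m`. -/
def φ' (m : ℕ) : PowerSeries ℂ →+* sub m :=
  (φ).codRestrict (sub m) (fun p => nat_supp_mem_sub m _ (ofPowerSeries_support p))

lemma twistHom_comp_φ' (m : ℕ) (ε : ℂ) (hε : ε ≠ 0) (hεm : ε ^ m = 1) :
    (twistHom m ε hε).comp (φ' m) = φ := by
  refine RingHom.ext fun p => ?_
  show twist m ε (φ p) = φ p
  apply twist_fix hεm
  intro q hq
  obtain ⟨k, hk⟩ := ofPowerSeries_support p q hq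
  exact ⟨k, hk⟩

lemma root_twist {n : ℕ} {f : Polynomial (PowerSeries ℂ)} {γ : L}
    (hγsup : γ ∈ sub n) (hγ : Polynomial.eval₂ φ γ f = 0)
    {ε : ℂ} (hε : ε ≠ 0) (hεn : ε ^ n = 1) :
    Polynomial.eval₂ φ (twist n ε γ) f = 0 := by
  set γ' : sub n := ⟨γ, hγsup⟩
  have h0 : Polynomial.eval₂ (φ' n) γ' f = 0 := by
    have := Polynomial.hom_eval₂ f (φ' n) (sub n).subtype γ'
    have hcomp : ((sub n).subtype).comp (φ' n) = φ := by ext p; rfl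
    rw [hcomp] at this
    have : ((sub n).subtype) (Polynomial.eval₂ (φ' n) γ' f) = 0 := by
      rw [this]; exact hγ
    exact Subtype.ext this
  have := Polynomial.hom_eval₂ f (φ' n) (twistHom n ε hε) γ'
  rw [twistHom_comp_φ' n ε hε hεn, h0, map_zero] at this
  have hγ'' : (twistHom n ε hε) γ' = twist n ε γ := rfl
  rw [hγ''] at this
  exact this.symm

lemma twist_one_eps (m : ℕ) (γ : L) : twist m 1 γ = γ := by
  ext q; rw [twist_coeff, one_zpow, one_mul]

/-- The subring of Hahn series with nonnegative support contained in `(1/m)·ℤ`. -/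
def subA (m : ℕ) : Subring L where
  carrier := {h | ∀ q ∈ h.support, (0 ≤ q ∧ ∃ k : ℤ, q * m = (k : ℚ))}
  zero_mem' := by
    intro q hq
    rw [HahnSeries.mem_support, HahnSeries.coeff_zero] at hq
    exact absurd rfl hq
  one_mem' := by
    intro q hq
    rw [HahnSeries.mem_support] at hq
    by_cases h : q = 0
    · exact ⟨le_of_eq h.symm, 0, by rw [h]; push_cast; ring⟩
    · rw [HahnSeries.coeff_one, if_neg h] at hq; exact absurd rfl hq
  add_mem' := by
    intro a b ha hb q hq
    rw [HahnSeries.mem_support, HahnSeries.coeff_add] at hq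
    by_cases h : a.coeff q = 0
    · rw [h, zero_add] at hq; exact hb q ((HahnSeries.mem_support b q).2 hq)
    · exact ha q ((HahnSeries.mem_support a q).2 h)
  neg_mem' := by
    intro a ha q hq
    rw [HahnSeries.mem_support, HahnSeries.coeff_neg, neg_ne_zero] at hq
    exact ha q ((HahnSeries.mem_support a q).2 hq)
  mul_mem' := by
    intro a b ha hb q hq
    obtain ⟨q₁, hq₁, q₂, hq₂, rfl⟩ := HahnSeries.support_mul_subset hq
    obtain ⟨hp₁, k₁, hk₁⟩ := ha q₁ hq₁
    obtain ⟨hp₂, k₂, hk₂⟩ := hb q₂ hq₂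
    exact ⟨add_nonneg hp₁ hp₂, k₁ + k₂, by rw [add_mul, hk₁, hk₂]; push_cast; ring⟩

lemma subA_le_sub (m : ℕ) : subA m ≤ sub m := fun h hh q hq => (hh q hq).2

set_option maxHeartbeats 1000000 in
lemma no_smaller {n : ℕ} (hn : 0 < n) {f : Polynomial (PowerSeries ℂ)}
    (hmonic : f.Monic) (hdeg : f.natDegree = n) (hirr : Irreducible f)
    {γ : L} (hγpos : ∀ q ∈ γ.support, 0 < q)
    {m : ℕ} (hm0 : 0 < m) (hmn : m < n)
    (hγm : γ ∈ sub m) (hγ : Polynomial.eval₂ φ γ f = 0) : False := by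
  classical
  set ζ : ℂ := Complex.exp (2 * Real.pi * Complex.I / m) with hζdef
  have hζ : IsPrimitiveRoot ζ m := Complex.isPrimitiveRoot_exp m hm0.ne'
  have hζ0 : ζ ≠ 0 := hζ.ne_zero hm0.ne'
  set δ : ℕ → L := fun j => twist m (ζ ^ j) γ with hδdef
  have hδA : ∀ j, δ j ∈ subA m := by
    intro j q hq
    have hq' := twist_support_subset m (ζ ^ j) γ hq
    exact ⟨le_of_lt (hγpos q hq'), hγm q hq'⟩
  set G₂ : Polynomial (subA m) :=
    ∏ j ∈ Finset.range m, (X - C (⟨δ j, hδA j⟩ : subA m)) with hG₂def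
  set Gl : Polynomial L := ∏ j ∈ Finset.range m, (X - C (δ j)) with hGldef
  have hGlmap : G₂.map (subA m).subtype = Gl := by
    rw [Polynomial.map_prod]
    apply Finset.prod_congr rfl
    intro j _
    rw [Polynomial.map_sub, Polynomial.map_X, Polynomial.map_C]
    rfl
  have hGlmonic : Gl.Monic := monic_prod_of_monic _ _ fun j _ => monic_X_sub_C _
  have hGldeg : Gl.natDegree = m := by
    rw [hGldef, Polynomial.natDegree_prod_of_monic _ _ (fun j _ => monic_X_sub_C _)]
    simp
  have hδ0 : δ 0 = γ := by
    show twist m (ζ ^ 0) γ = γ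
    rw [pow_zero, twist_one_eps]
  have hGlγ : Gl.eval γ = 0 := by
    rw [hGldef, Polynomial.eval_prod]
    apply Finset.prod_eq_zero (Finset.mem_range.2 hm0)
    rw [hδ0, Polynomial.eval_sub, Polynomial.eval_X, Polynomial.eval_C, sub_self]
  -- twist invariance of the coefficients of Gl
  set T : sub m →+* L := twistHom m ζ hζ0 with hTdef
  set Tι : subA m →+* L := T.comp (Subring.inclusion (subA_le_sub m)) with hTιdef
  have hTι : ∀ x : subA m, Tι x = twist m ζ x.1 := fun x => rfl
  have hmapT : G₂.map Tι = Gl := by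
    rw [hG₂def, Polynomial.map_prod]
    have h1 : ∀ j, (X - C (⟨δ j, hδA j⟩ : subA m)).map Tι = X - C (δ (j + 1)) := by
      intro j
      rw [Polynomial.map_sub, Polynomial.map_X, Polynomial.map_C, hTι]
      show X - C (twist m ζ (δ j)) = _
      rw [hδdef]
      show X - C (twist m ζ (twist m (ζ ^ j) γ)) = X - C (twist m (ζ ^ (j+1)) γ)
      rw [twist_twist, pow_succ']
    rw [Finset.prod_congr rfl fun j _ => h1 j]
    -- reindex the product
    have hperiod : δ m = δ 0 := by rw [hδdef]; simp [hζ.pow_eq_one]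
    have h2 := Finset.prod_range_succ (fun j => (X : Polynomial L) - C (δ j)) m
    have h3 := Finset.prod_range_succ' (fun j => (X : Polynomial L) - C (δ j)) m
    rw [h2] at h3
    rw [hperiod] at h3
    have hX0 : (X : Polynomial L) - C (δ 0) ≠ 0 := Polynomial.X_sub_C_ne_zero (δ 0)
    exact mul_right_cancel₀ hX0 h3.symm
  have hfix : ∀ k : ℕ, twist m ζ (Gl.coeff k) = Gl.coeff k := by
    intro k
    have h1 : Gl.coeff k = ((G₂.coeff k : subA m) : L) := by
      rw [← hGlmap, Polynomial.coeff_map]; rfl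
    have h2 : (G₂.map Tι).coeff k = Tι (G₂.coeff k) := Polynomial.coeff_map _ _
    rw [hmapT] at h2
    calc twist m ζ (Gl.coeff k) = Tι (G₂.coeff k) := by rw [h1]; exact (hTι _).symm
    _ = Gl.coeff k := h2.symm
  -- coefficients have natural support
  have hGlnat : ∀ k : ℕ, ∀ q ∈ (Gl.coeff k).support, ∃ t : ℕ, q = (t : ℚ) := by
    intro k q hq
    have hc : (Gl.coeff k).coeff q ≠ 0 := (HahnSeries.mem_support _ q).1 hq
    have hmem : Gl.coeff k ∈ subA m := by
      rw [← hGlmap, Polynomial.coeff_map]; exact (G₂.coeff k).2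
    obtain ⟨hqpos, k', hk'⟩ := hmem q hq
    have heq := congrArg (fun h : L => h.coeff q) (hfix k)
    simp only [twist_coeff] at heq
    have h2 : ζ ^ (q * m : ℚ).num = 1 := by
      have := mul_right_cancel₀ hc (heq.trans (one_mul _).symm)
      exact this
    rw [num_eq _ _ hk'] at h2
    obtain ⟨t, ht⟩ := (hζ.zpow_eq_one_iff_dvd k').1 h2
    have hm' : (m : ℚ) ≠ 0 := Nat.cast_ne_zero.2 hm0.ne'
    have hqt : q = (t : ℚ) := by
      have hstep : q * m = (t : ℚ) * m := by rw [hk', ht]; push_cast; ring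
      exact mul_right_cancel₀ hm' hstep
    have ht0 : 0 ≤ t := by
      by_contra hlt
      push_neg at hlt
      rw [hqt] at hqpos
      have : (t : ℚ) < 0 := by exact_mod_cast hlt
      linarith
    exact ⟨t.toNat, by rw [hqt]; exact_mod_cast (Int.toNat_of_nonneg ht0).symm⟩
  -- lift Gl to a polynomial over power series
  obtain ⟨g₀, hg₀⟩ : ∃ g₀ : Polynomial (PowerSeries ℂ), g₀.map φ = Gl := by
    rw [← Polynomial.mem_lifts]
    rw [Polynomial.lifts_iff_coeff_lifts]
    intro k
    obtain ⟨p, hp⟩ := mem_range_ofPowerSeries (Gl.coeff k) (hGlnat k)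
    exact ⟨p, hp⟩
  have hg₀deg : g₀.natDegree = m := by
    rw [← hGldeg, ← hg₀, Polynomial.natDegree_map_eq_of_injective
      (HahnSeries.ofPowerSeries_injective)]
  have hg₀ne : g₀ ≠ 0 := by
    intro h
    rw [h, Polynomial.map_zero] at hg₀
    exact hGlmonic.ne_zero hg₀.symm
  -- pass to the fraction field
  set R := PowerSeries ℂ
  set K := FractionRing R
  have hφinj : Function.Injective (φ : R →+* L) := HahnSeries.ofPowerSeries_injective
  set ψ : K →+* L := IsFractionRing.lift hφinj with hψdef
  have hψcomp : ψ.comp (algebraMap R K) = (φ : R →+* L) := by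
    rw [hψdef]
    exact IsLocalization.lift_comp _
  set f' : Polynomial K := f.map (algebraMap R K) with hf'def
  set g' : Polynomial K := g₀.map (algebraMap R K) with hg'def
  have hf'irr : Irreducible f' :=
    (hmonic.irreducible_iff_irreducible_map_fraction_map).1 hirr
  have hf'root : Polynomial.eval₂ ψ γ f' = 0 := by
    rw [hf'def, Polynomial.eval₂_map, hψcomp]; exact hγ
  have hg'root : Polynomial.eval₂ ψ γ g' = 0 := by
    rw [hg'def, Polynomial.eval₂_map, hψcomp, Polynomial.eval₂_eq_eval_map, hg₀]
    exact hGlγ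
  -- Bezout
  set d := EuclideanDomain.gcd f' g' with hddef
  have hbez : d = f' * EuclideanDomain.gcdA f' g' + g' * EuclideanDomain.gcdB f' g' :=
    EuclideanDomain.gcd_eq_gcd_ab f' g'
  have hEd : Polynomial.eval₂ ψ γ d = 0 := by
    rw [hbez]
    rw [Polynomial.eval₂_add, Polynomial.eval₂_mul, Polynomial.eval₂_mul, hf'root, hg'root,
      zero_mul, zero_mul, add_zero]
  have hdvdf : d ∣ f' := EuclideanDomain.gcd_dvd_left f' g'
  have hdvdg : d ∣ g' := EuclideanDomain.gcd_dvd_right f' g'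
  obtain ⟨e, he⟩ := hdvdf
  rcases hf'irr.isUnit_or_isUnit he with hu | hu
  · -- d is a unit : contradiction with hEd
    obtain ⟨c, hc, hCc⟩ := Polynomial.isUnit_iff.1 hu
    rw [← hCc, Polynomial.eval₂_C] at hEd
    have : c ≠ 0 := hc.ne_zero
    exact this (ψ.injective (by rw [hEd, map_zero]))
  · -- e is a unit : f' divides g', degree contradiction
    have hfd : f' ∣ d := by
      refine ⟨((hu.unit⁻¹ : (Polynomial K)ˣ) : Polynomial K), ?_⟩
      rw [he, mul_assoc, hu.mul_val_inv, mul_one]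
    have hfg : f' ∣ g' := hfd.trans hdvdg
    have hg'ne : g' ≠ 0 :=
      (Polynomial.map_ne_zero_iff (IsFractionRing.injective R K)).2 hg₀ne
    have h1 : f'.natDegree ≤ g'.natDegree := Polynomial.natDegree_le_of_dvd hfg hg'ne
    have h2 : f'.natDegree = n := by
      rw [hf'def, hmonic.natDegree_map, hdeg]
    have h3 : g'.natDegree ≤ m := by
      rw [hg'def, ← hg₀deg]
      exact Polynomial.natDegree_map_le
    omega

end NP

/-- Let `f ∈ ℂ{x}[y]` (formally: `f` a polynomial over formal power series) be an
irreducible Weierstrass polynomial of degree `n` with a Newton–Puiseux root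
`γ = Σ_{i≥1} a_i x^{i/n}`.  Then the Newton–Puiseux roots of `f` are exactly the series
obtained from `γ` by the substitutions `x^{1/n} ↦ ω^j x^{1/n}`, `0 ≤ j < n`, where `ω` is
a primitive `n`-th root of unity. -/
theorem newton_puiseux_roots_cycle (n : ℕ) (hn : 0 < n)
    (f : Polynomial (PowerSeries ℂ)) (hmonic : f.Monic) (hdeg : f.natDegree = n)
    (hW : ∀ j, j < n → PowerSeries.constantCoeff (f.coeff j) = 0)
    (hirr : Irreducible f)
    (γ : HahnSeries ℚ ℂ)
    (hγsupp : γ.support ⊆ {q : ℚ | ∃ i : ℕ, 1 ≤ i ∧ q = (i : ℚ) / n})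
    (hγ : Polynomial.eval₂ (HahnSeries.ofPowerSeries ℚ ℂ) γ f = 0)
    (ω : ℂ) (hω : IsPrimitiveRoot ω n) :
    ∀ δ : HahnSeries ℚ ℂ,
      Polynomial.eval₂ (HahnSeries.ofPowerSeries ℚ ℂ) δ f = 0 ↔
        ∃ j, j < n ∧ δ = twist n (ω ^ j) γ := by
  intro δ
  have hω0 : ω ≠ 0 := hω.ne_zero hn.ne'
  have hnQ : (n : ℚ) ≠ 0 := Nat.cast_ne_zero.2 hn.ne'
  have hγsub : γ ∈ NP.sub n := by
    intro q hq
    obtain ⟨i, hi1, hqe⟩ := hγsupp hq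
    refine ⟨(i : ℤ), ?_⟩
    rw [hqe]
    push_cast
    field_simp
  have hγpos : ∀ q ∈ γ.support, 0 < q := by
    intro q hq
    obtain ⟨i, hi1, hqe⟩ := hγsupp hq
    rw [hqe]
    have h1 : (0 : ℚ) < (i : ℚ) := by exact_mod_cast hi1
    have h2 : (0 : ℚ) < (n : ℚ) := by exact_mod_cast hn
    positivity
  set F := f.map (HahnSeries.ofPowerSeries ℚ ℂ) with hF
  have hFmonic : F.Monic := hmonic.map _
  have hF0 : F ≠ 0 := hFmonic.ne_zero
  have hFdeg : F.natDegree = n := by rw [hF, hmonic.natDegree_map, hdeg]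
  have hroot_iff : ∀ x : HahnSeries ℚ ℂ,
      Polynomial.eval₂ (HahnSeries.ofPowerSeries ℚ ℂ) x f = 0 ↔ x ∈ F.roots := by
    intro x
    rw [Polynomial.mem_roots hF0]
    unfold Polynomial.IsRoot
    rw [hF, ← Polynomial.eval₂_eq_eval_map]
  have htw_root : ∀ j : ℕ,
      Polynomial.eval₂ (HahnSeries.ofPowerSeries ℚ ℂ) (twist n (ω ^ j) γ) f = 0 := by
    intro j
    refine NP.root_twist hγsub hγ (pow_ne_zero j hω0) ?_
    rw [← pow_mul, mul_comm, pow_mul, hω.pow_eq_one, one_pow]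
  have hinj : ∀ j k, j ≤ k → k < n → twist n (ω ^ j) γ = twist n (ω ^ k) γ → j = k := by
    intro j k hjk hk heq
    by_contra hne
    have hlt : j < k := lt_of_le_of_ne hjk hne
    set e := k - j with hedef
    have he0 : 0 < e := Nat.sub_pos_of_lt hlt
    have hen : e < n := lt_of_le_of_lt (Nat.sub_le k j) hk
    have key : ∀ q ∈ γ.support, ∀ t : ℤ, q * n = (t : ℚ) → (n : ℤ) ∣ (e : ℤ) * t := by
      intro q hq t ht
      have hc : γ.coeff q ≠ 0 := (HahnSeries.mem_support γ q).1 hq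
      have h1 := congrArg (fun h : HahnSeries ℚ ℂ => h.coeff q) heq
      simp only [NP.twist_coeff] at h1
      have h2 : (ω ^ j) ^ (q * (n:ℚ)).num = (ω ^ k) ^ (q * (n:ℚ)).num :=
        mul_right_cancel₀ hc h1
      rw [NP.num_eq _ _ ht] at h2
      have hj' : (ω ^ j) ^ t = ω ^ ((j : ℤ) * t) := by rw [← zpow_natCast ω j, ← zpow_mul]
      have hk' : (ω ^ k) ^ t = ω ^ ((k : ℤ) * t) := by rw [← zpow_natCast ω k, ← zpow_mul]
      rw [hj', hk'] at h2
      have h3 : ω ^ ((e : ℤ) * t) = 1 := by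
        have hcast : (e : ℤ) * t = (k : ℤ) * t - (j : ℤ) * t := by
          rw [hedef]
          push_cast [Nat.cast_sub hjk]
          ring
        rw [hcast, zpow_sub₀ hω0, ← h2, div_self (zpow_ne_zero _ hω0)]
      exact (hω.zpow_eq_one_iff_dvd _).1 h3
    set g := Nat.gcd n e with hgdef
    have hg0 : 0 < g := Nat.gcd_pos_of_pos_left e hn
    have hgn : g < n := lt_of_le_of_lt (Nat.le_of_dvd he0 (Nat.gcd_dvd_right n e)) hen
    have hγg : γ ∈ NP.sub g := by
      intro q hq
      obtain ⟨i, hi1, hqe⟩ := hγsupp hq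
      have ht : q * n = ((i : ℤ) : ℚ) := by rw [hqe]; push_cast; field_simp
      have hdvd : (n : ℤ) ∣ (e : ℤ) * i := key q hq i ht
      set n' := n / g with hn'def
      set e' := e / g with he'def
      have hng : g * n' = n := Nat.mul_div_cancel' (Nat.gcd_dvd_left n e)
      have heg : g * e' = e := Nat.mul_div_cancel' (Nat.gcd_dvd_right n e)
      have hcop : Nat.Coprime n' e' := Nat.coprime_div_gcd_div_gcd hg0
      have hdvd2 : (n' : ℤ) ∣ (e' : ℤ) * i := by
        have hgZ : (g : ℤ) ≠ 0 := Int.natCast_ne_zero.2 hg0.ne'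
        have h5 : ((g : ℤ) * n') ∣ (g : ℤ) * ((e' : ℤ) * i) := by
          have : ((g : ℤ) * n') = (n : ℤ) := by exact_mod_cast hng
          rw [this]
          have : (g : ℤ) * ((e' : ℤ) * i) = (e : ℤ) * i := by
            rw [← mul_assoc]
            congr 1
            exact_mod_cast heg
          rw [this]
          exact hdvd
        exact (mul_dvd_mul_iff_left hgZ).1 h5
      have hdvd3 : (n' : ℤ) ∣ i := by
        have hcop' : IsCoprime ((n' : ℤ)) ((e' : ℤ)) := Nat.isCoprime_iff_coprime.2 hcop
        exact hcop'.dvd_of_dvd_mul_left hdvd2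
      obtain ⟨s, hs⟩ := hdvd3
      refine ⟨s, ?_⟩
      rw [hqe, div_mul_eq_mul_div, div_eq_iff hnQ]
      have hiq : (i : ℚ) = (n' : ℚ) * (s : ℚ) := by exact_mod_cast hs
      have hnq : (n : ℚ) = (g : ℚ) * (n' : ℚ) := by exact_mod_cast hng.symm
      rw [hiq, hnq]
      ring
    exact NP.no_smaller hn hmonic hdeg hirr hγpos hg0 hgn hγg hγ
  have hinj2 : ∀ j k, j < n → k < n → twist n (ω ^ j) γ = twist n (ω ^ k) γ → j = k := by
    intro j k hj hk heq
    rcases le_total j k with h | h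
    · exact hinj j k h hk heq
    · exact (hinj k j h hj heq.symm).symm
  set M : Multiset (HahnSeries ℚ ℂ) :=
    (Multiset.range n).map (fun j => twist n (ω ^ j) γ) with hM
  have hMnodup : M.Nodup := by
    refine Multiset.Nodup.map_on ?_ (Multiset.nodup_range n)
    intro j hj k hk heq
    exact hinj2 j k (Multiset.mem_range.1 hj) (Multiset.mem_range.1 hk) heq
  have hMcard : Multiset.card M = n := by rw [hM, Multiset.card_map, Multiset.card_range]
  have hMsub : M ⊆ F.roots := by
    intro a ha
    obtain ⟨j, hj, rfl⟩ := Multiset.mem_map.1 ha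
    exact (hroot_iff _).1 (htw_root j)
  have hMle : M ≤ F.roots := (Multiset.le_iff_subset hMnodup).2 hMsub
  have hMeq : M = F.roots := by
    refine Multiset.eq_of_le_of_card_le hMle ?_
    rw [hMcard]
    exact le_trans (Polynomial.card_roots' F) (le_of_eq hFdeg)
  constructor
  · intro hroot
    have hmem := (hroot_iff δ).1 hroot
    rw [← hMeq] at hmem
    obtain ⟨j, hj, hje⟩ := Multiset.mem_map.1 hmem
    exact ⟨j, Multiset.mem_range.1 hj, hje.symm⟩
  · rintro ⟨j, hj, rfl⟩
    exact htw_root j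

end
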